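/- A polynomial with nonnegative coefficients is symmetric and unimodal of darga m if and only if it can be written as a finite sum of polynomials of the form c(q^r + q^{r+1} + ... + q^{m-r}) with c > 0 and 0 ≤ r ≤ m/2. -/

import Mathlib

open Polynomial

/-- `p` is symmetric of darga `m`: the coefficient of `q^k` equals the coefficient of
`q^(m-k)`, and no coefficients above degree `m`. -/
def IsSymmOfDarga (p : Polynomial ℝ) (m : ℕ) : Prop :=
  (∀ i j : ℕ, i + j = m → p.coeff i = p.coeff j) ∧ ∀ i : ℕ, m < i → p.coeff i = 0

/-- `p` is unimodal: coefficients weakly increase up to some index and then weakly decrease. -/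
def IsUnimodal (p : Polynomial ℝ) : Prop :=
  ∃ t : ℕ, (∀ i j : ℕ, i ≤ j → j ≤ t → p.coeff i ≤ p.coeff j) ∧
    (∀ i j : ℕ, t ≤ i → i ≤ j → p.coeff j ≤ p.coeff i)

lemma atom_coeff (r s k : ℕ) :
    (∑ t ∈ Finset.Icc r s, (X : Polynomial ℝ) ^ t).coeff k
      = if r ≤ k ∧ k ≤ s then 1 else 0 := by
  rw [Polynomial.finset_sum_coeff]
  simp only [Polynomial.coeff_X_pow]
  rw [Finset.sum_ite_eq (Finset.Icc r s) k (fun _ => (1 : ℝ))]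
  simp [Finset.mem_Icc]

/-- A nonnegative polynomial is symmetric and unimodal of darga `m` iff it is a finite sum of
"atoms" `c • (q^r + q^(r+1) + ⋯ + q^(m-r))` with `c > 0` and `0 ≤ r ≤ m/2`. -/
theorem symm_unimodal_iff_sum_of_atoms (p : Polynomial ℝ) (m : ℕ)
    (hp0 : ∀ i, 0 ≤ p.coeff i) :
    (IsSymmOfDarga p m ∧ IsUnimodal p) ↔
      ∃ (N : ℕ) (c : Fin N → ℝ) (r : Fin N → ℕ),
        (∀ a, 0 < c a) ∧ (∀ a, 2 * r a ≤ m) ∧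
        p = ∑ a, Polynomial.C (c a) * ∑ t ∈ Finset.Icc (r a) (m - r a), Polynomial.X ^ t := by
  constructor
  · rintro ⟨⟨hsymm, htop⟩, t, hinc, hdec⟩
    -- coefficients are monotone up to m/2
    have hmono : ∀ i j : ℕ, i ≤ j → 2 * j ≤ m → p.coeff i ≤ p.coeff j := by
      intro i j hij hjm
      rcases le_or_gt j t with h | h
      · exact hinc i j hij h
      · have h1 : p.coeff (m - i) ≤ p.coeff j := hdec j (m - i) h.le (by omega)
        have h2 : p.coeff i = p.coeff (m - i) := hsymm i (m - i) (by omega)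
        linarith
    set d : ℕ → ℝ := fun r => if r = 0 then p.coeff 0 else p.coeff r - p.coeff (r - 1) with hd
    have htel : ∀ n : ℕ, ∑ r ∈ Finset.range (n + 1), d r = p.coeff n := by
      intro n
      induction n with
      | zero => simp [hd]
      | succ n ih =>
        rw [Finset.sum_range_succ, ih]
        simp [hd]
    have hd0 : ∀ r ∈ Finset.range (m / 2 + 1), 0 ≤ d r := by
      intro r hr
      rw [Finset.mem_range] at hr
      rcases r with _ | r'
      · simpa [hd] using hp0 0
      · simp only [hd, Nat.succ_ne_zero, if_false, Nat.succ_sub_one]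
        have := hmono r' (r' + 1) (Nat.le_succ _) (by omega)
        linarith
    have hkey : p = ∑ r ∈ Finset.range (m / 2 + 1),
        C (d r) * ∑ t ∈ Finset.Icc r (m - r), (X : Polynomial ℝ) ^ t := by
      ext k
      rw [Polynomial.finset_sum_coeff]
      simp only [Polynomial.coeff_C_mul, atom_coeff]
      by_cases hk : k ≤ m
      · have hcong : ∀ r ∈ Finset.range (m / 2 + 1),
            (d r * if r ≤ k ∧ k ≤ m - r then 1 else 0)
              = if r ∈ Finset.range (min k (m - k) + 1) then d r else 0 := by
          intro r _
          by_cases hc : r ≤ k ∧ k ≤ m - r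
          · rw [if_pos hc, if_pos (Finset.mem_range.mpr (by omega)), mul_one]
          · rw [if_neg hc, if_neg (fun hmem => hc (by
              have := Finset.mem_range.mp hmem; omega)), mul_zero]
        rw [Finset.sum_congr rfl hcong, Finset.sum_ite_mem]
        have hrange : Finset.range (m / 2 + 1) ∩ Finset.range (min k (m - k) + 1)
            = Finset.range (min k (m - k) + 1) := by
          ext a
          simp only [Finset.mem_inter, Finset.mem_range]
          omega
        rw [hrange, htel]
        rcases le_or_gt k (m - k) with h | h
        · rw [min_eq_left h]
        · rw [min_eq_right h.le]
          exact hsymm k (m - k) (by omega)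
      · rw [htop k (by omega)]
        symm
        apply Finset.sum_eq_zero
        intro r hr
        rw [Finset.mem_range] at hr
        rw [if_neg (by omega), mul_zero]
    set s : Finset ℕ := (Finset.range (m / 2 + 1)).filter (fun r => 0 < d r) with hs
    have hps : p = ∑ r ∈ s, C (d r) * ∑ t ∈ Finset.Icc r (m - r), (X : Polynomial ℝ) ^ t := by
      rw [hkey]
      refine (Finset.sum_filter_of_ne ?_).symm
      intro x hx hne
      rcases (hd0 x hx).lt_or_eq with h | h
      · exact h
      · exact absurd (by rw [← h, map_zero, zero_mul]) hne
    refine ⟨s.card, fun a => d (s.equivFin.symm a), fun a => (s.equivFin.symm a : ℕ), ?_, ?_, ?_⟩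
    · intro a
      exact (Finset.mem_filter.mp (s.equivFin.symm a).2).2
    · intro a
      show 2 * ((s.equivFin.symm a : ℕ)) ≤ m
      have := Finset.mem_range.mp (Finset.mem_filter.mp (s.equivFin.symm a).2).1
      omega
    · rw [hps, ← Finset.sum_coe_sort s
        (fun r => C (d r) * ∑ t ∈ Finset.Icc r (m - r), (X : Polynomial ℝ) ^ t)]
      exact (Equiv.sum_comp s.equivFin.symm
        (fun x : s => C (d (x : ℕ)) * ∑ t ∈ Finset.Icc (x : ℕ) (m - (x : ℕ)),
          (X : Polynomial ℝ) ^ t)).symm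
  · rintro ⟨N, c, r, hc, hr, rfl⟩
    have hcoeff : ∀ k : ℕ, (∑ a, C (c a) * ∑ t ∈ Finset.Icc (r a) (m - r a),
        (X : Polynomial ℝ) ^ t).coeff k
          = ∑ a, c a * (if r a ≤ k ∧ k ≤ m - r a then 1 else 0) := by
      intro k
      rw [Polynomial.finset_sum_coeff]
      simp only [Polynomial.coeff_C_mul, atom_coeff]
    constructor
    · constructor
      · intro i j hij
        rw [hcoeff, hcoeff]
        apply Finset.sum_congr rfl
        intro a _
        have ha := hr a
        congr 1
        by_cases h : r a ≤ i ∧ i ≤ m - r a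
        · rw [if_pos h, if_pos (by omega)]
        · rw [if_neg h, if_neg (by omega)]
      · intro i hi
        rw [hcoeff]
        apply Finset.sum_eq_zero
        intro a _
        have ha := hr a
        rw [if_neg (by omega), mul_zero]
    · refine ⟨m / 2, ?_, ?_⟩
      · intro i j hij hjt
        rw [hcoeff, hcoeff]
        apply Finset.sum_le_sum
        intro a _
        have ha := hr a
        by_cases h : r a ≤ i ∧ i ≤ m - r a
        · rw [if_pos h, if_pos (by omega)]
        · rw [if_neg h, mul_zero]
          split_ifs
          · simpa using (hc a).le
          · simp
      · intro i j hti hij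
        rw [hcoeff, hcoeff]
        apply Finset.sum_le_sum
        intro a _
        have ha := hr a
        by_cases h : r a ≤ j ∧ j ≤ m - r a
        · rw [if_pos h, if_pos (by omega)]
        · rw [if_neg h, mul_zero]
          split_ifs
          · simpa using (hc a).le
          · simp
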